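/- If w ∈ S_n is a dominant permutation, then the Schubert determinantal ideal is generated by the variables indexed by the effective region: I_w = ⟨z_ij : (i,j) ∈ λ(w)⟩ in C[z_ij : 1 ≤ i,j ≤ n]. -/

import Mathlib

open MvPolynomial

/-- `r_{ij}(w)` (0-based): the number of `k ≤ i` with `w k ≤ j`. -/
def rankNW {n : ℕ} (w : Equiv.Perm (Fin n)) (i j : Fin n) : ℕ :=
  (Finset.univ.filter fun k : Fin n => k ≤ i ∧ w k ≤ j).card

/-- The Schubert determinantal ideal `I_w ⊆ ℂ[z_{ij}]`: generated by all
`(r_{ij}+1) × (r_{ij}+1)` minors of the northwest submatrices of the generic matrix. -/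
noncomputable def schubertIdeal {n : ℕ} (w : Equiv.Perm (Fin n)) :
    Ideal (MvPolynomial (Fin n × Fin n) ℂ) :=
  Ideal.span { f | ∃ (i j : Fin n) (rows cols : Fin (rankNW w i j + 1) → Fin n),
    StrictMono rows ∧ StrictMono cols ∧ (∀ a, rows a ≤ i) ∧ (∀ a, cols a ≤ j) ∧
    f = (Matrix.of fun a b => (X (rows a, cols b) : MvPolynomial (Fin n × Fin n) ℂ)).det }

/-- The Rothe diagram of `w` (0-based): boxes `(i,j)` with `j < w i` and `i < w⁻¹ j`. -/
def rotheDiagram {n : ℕ} (w : Equiv.Perm (Fin n)) : Finset (Fin n × Fin n) :=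
  Finset.univ.filter fun p => p.2 < w p.1 ∧ p.1 < w⁻¹ p.2

/-- The essential set `E(w)`. -/
def essentialSet {n : ℕ} (w : Equiv.Perm (Fin n)) : Finset (Fin n × Fin n) :=
  (rotheDiagram w).filter fun p =>
    (∀ q ∈ rotheDiagram w, ¬(q.1 = p.1 ∧ (q.2 : ℕ) = (p.2 : ℕ) + 1)) ∧
    (∀ q ∈ rotheDiagram w, ¬((q.1 : ℕ) = (p.1 : ℕ) + 1 ∧ q.2 = p.2))

/-- The effective region `λ(w)`: all boxes weakly northwest of some essential set box. -/
def effRegion {n : ℕ} (w : Equiv.Perm (Fin n)) : Finset (Fin n × Fin n) :=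
  Finset.univ.filter fun p => ∃ q ∈ essentialSet w, p.1 ≤ q.1 ∧ p.2 ≤ q.2

/-- `w` is dominant if its Rothe diagram equals its effective region. -/
def IsDominant {n : ℕ} (w : Equiv.Perm (Fin n)) : Prop :=
  rotheDiagram w = effRegion w

section Aux

variable {n : ℕ} (w : Equiv.Perm (Fin n))

lemma mem_rothe {p : Fin n × Fin n} :
    p ∈ rotheDiagram w ↔ p.2 < w p.1 ∧ p.1 < w⁻¹ p.2 := by
  simp [rotheDiagram]

lemma notMem_rothe {p : Fin n × Fin n} :
    p ∉ rotheDiagram w ↔ w p.1 ≤ p.2 ∨ w⁻¹ p.2 ≤ p.1 := by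
  rw [mem_rothe, not_and_or, not_lt, not_lt]

/-- The complement of the Rothe diagram of a dominant permutation is southeast-closed. -/
lemma se_closed (hw : IsDominant w) {p q : Fin n × Fin n}
    (hp : p ∉ rotheDiagram w) (h1 : p.1 ≤ q.1) (h2 : p.2 ≤ q.2) :
    q ∉ rotheDiagram w := by
  intro hq
  apply hp
  unfold IsDominant at hw
  rw [hw] at hq ⊢
  simp only [effRegion, Finset.mem_filter, Finset.mem_univ, true_and] at hq ⊢
  obtain ⟨e, he, h3, h4⟩ := hq
  exact ⟨e, he, h1.trans h3, h2.trans h4⟩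

lemma rankNW_eq_zero (hw : IsDominant w) {p : Fin n × Fin n}
    (hp : p ∈ rotheDiagram w) : rankNW w p.1 p.2 = 0 := by
  rw [rankNW, Finset.card_eq_zero, Finset.filter_eq_empty_iff]
  rintro k - ⟨hk1, hk2⟩
  have hkp : (k, p.2) ∈ rotheDiagram w := by
    by_contra hno
    exact (se_closed w hw hno (show (k, p.2).1 ≤ p.1 from hk1) (le_refl p.2)) hp
  rw [mem_rothe] at hkp
  exact absurd hkp.1 (not_lt.mpr hk2)

/-- A `ℕ`-indexed version of the rank function. -/
def rkn (ivl : ℕ) (j : Fin n) : ℕ :=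
  (Finset.univ.filter fun k : Fin n => (k : ℕ) < ivl ∧ w k ≤ j).card

lemma rkn_mono {ivl ivl' : ℕ} (h : ivl ≤ ivl') (j : Fin n) :
    rkn w ivl j ≤ rkn w ivl' j := by
  apply Finset.card_le_card
  intro k hk
  simp only [Finset.mem_filter] at *
  exact ⟨hk.1, lt_of_lt_of_le hk.2.1 h, hk.2.2⟩

lemma rankNW_eq_rkn (i j : Fin n) : rankNW w i j = rkn w ((i : ℕ) + 1) j := by
  unfold rankNW rkn
  congr 1
  apply Finset.filter_congr
  intro k _
  constructor
  · rintro ⟨h1, h2⟩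
    exact ⟨by have := Fin.le_def.mp h1; omega, h2⟩
  · rintro ⟨h1, h2⟩
    exact ⟨Fin.le_def.mpr (by omega), h2⟩

lemma rkn_step (i : Fin n) {iv : ℕ} (hiv : (i : ℕ) = iv) {j : Fin n} (hj : w i ≤ j) :
    rkn w iv j + 1 ≤ rkn w (iv + 1) j := by
  have hni : i ∉ Finset.univ.filter fun k : Fin n => (k : ℕ) < iv ∧ w k ≤ j :=
    fun h => absurd (Finset.mem_filter.mp h).2.1 (by omega)
  have hsub : insert i (Finset.univ.filter fun k : Fin n => (k : ℕ) < iv ∧ w k ≤ j) ⊆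
      Finset.univ.filter fun k : Fin n => (k : ℕ) < iv + 1 ∧ w k ≤ j := by
    intro k hk
    rcases Finset.mem_insert.mp hk with rfl | hk
    · exact Finset.mem_filter.mpr ⟨Finset.mem_univ _, by omega, hj⟩
    · have := Finset.mem_filter.mp hk
      exact Finset.mem_filter.mpr ⟨this.1, by omega, this.2.2⟩
  calc rkn w iv j + 1
      = (insert i (Finset.univ.filter fun k : Fin n => (k : ℕ) < iv ∧ w k ≤ j)).card :=
        (Finset.card_insert_of_notMem hni).symm
    _ ≤ _ := Finset.card_le_card hsub

/-- Key combinatorial bound: a set of non-attacking rooks avoiding the Rothe diagram of a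
dominant permutation, contained in the rectangle of rows `< ivl` and columns `≤ j`,
has at most `rkn w ivl j` elements. -/
lemma rook_bound (hw : IsDominant w) (j : Fin n) :
    ∀ t ivl m : ℕ, ivl + m ≤ t →
    ∀ S : Finset (Fin n × Fin n),
      (S.filter fun p => w p.1 ≠ p.2).card ≤ m →
      (∀ p ∈ S, p ∉ rotheDiagram w) →
      (∀ p ∈ S, (p.1 : ℕ) < ivl ∧ p.2 ≤ j) →
      (∀ p ∈ S, ∀ q ∈ S, p ≠ q → p.1 ≠ q.1 ∧ p.2 ≠ q.2) →
      S.card ≤ rkn w ivl j := by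
  intro t
  induction t using Nat.strong_induction_on with
  | _ t ih =>
  intro ivl m hts S hm hD hb hatt
  cases ivl with
  | zero =>
    have hS : S = ∅ := Finset.eq_empty_of_forall_notMem fun p hp => by
      have := (hb p hp).1; omega
    simp [hS]
  | succ iv =>
    by_cases hrow : ∃ p ∈ S, (p.1 : ℕ) = iv
    · obtain ⟨r0, hr0S, hr0v⟩ := hrow
      have hrows : ∀ p ∈ S, p ≠ r0 → (p.1 : ℕ) < iv := by
        intro p hp hne
        have h1 := (hb p hp).1
        have h2 : p.1 ≠ r0.1 := (hatt p hp r0 hr0S hne).1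
        have h3 : (p.1 : ℕ) ≠ iv := fun h => h2 (Fin.ext (by omega))
        omega
      by_cases hA : w r0.1 ≤ j
      · -- the top-row rook contributes a new dot; remove it and recurse
        have hmv : ((S.erase r0).filter fun p => w p.1 ≠ p.2).card ≤ m :=
          le_trans (Finset.card_le_card
            (Finset.filter_subset_filter _ (Finset.erase_subset _ _))) hm
        have h1 : (S.erase r0).card ≤ rkn w iv j := by
          refine ih (iv + m) (by omega) iv m le_rfl _ hmv
            (fun p hp => hD p (Finset.mem_of_mem_erase hp))
            (fun p hp => ⟨hrows p (Finset.mem_of_mem_erase hp) (Finset.ne_of_mem_erase hp),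
              (hb p (Finset.mem_of_mem_erase hp)).2⟩)
            (fun p hp q hq hne =>
              hatt p (Finset.mem_of_mem_erase hp) q (Finset.mem_of_mem_erase hq) hne)
        have h2 := rkn_step w r0.1 hr0v hA
        have h3 : (S.erase r0).card = S.card - 1 := Finset.card_erase_of_mem hr0S
        have h4 : 0 < S.card := Finset.card_pos.mpr ⟨r0, hr0S⟩
        omega
      · -- the top-row rook sits strictly east of a dot in its column
        have hb2 : r0.2 ≤ j := (hb r0 hr0S).2
        have hni : ¬ w r0.1 ≤ r0.2 := fun h => hA (le_trans h hb2)
        have hk : w⁻¹ r0.2 ≤ r0.1 := ((notMem_rothe w).mp (hD r0 hr0S)).resolve_left hni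
        set k : Fin n := w⁻¹ r0.2 with hkdef
        have hwk : w k = r0.2 := Equiv.apply_symm_apply w r0.2
        have hkne : k ≠ r0.1 := fun h => hni (le_of_eq (by rw [← h, hwk]))
        have hklt : (k : ℕ) < iv := by
          have h5 : (k : ℕ) ≤ (r0.1 : ℕ) := Fin.le_def.mp hk
          have h6 : (k : ℕ) ≠ (r0.1 : ℕ) := fun h => hkne (Fin.ext h)
          omega
        have hkbD : (k, r0.2) ∉ rotheDiagram w := by
          rw [notMem_rothe]
          exact Or.inl (le_of_eq hwk)
        by_cases hocc : ∃ q ∈ S, q.1 = k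
        · -- the dot's row is occupied: swap the two rooks' columns
          obtain ⟨q, hqS, hqk⟩ := hocc
          have hqne : q ≠ r0 := fun h => hkne (by rw [← hqk, h])
          have hyb : q.2 ≠ r0.2 := (hatt q hqS r0 hr0S hqne).2
          set rest := (S.erase r0).erase q with hrest
          have hqrest : q ∉ rest := Finset.notMem_erase _ _
          have hr0rest : r0 ∉ rest :=
            fun h => (Finset.notMem_erase r0 S) (Finset.mem_of_mem_erase h)
          have restS : rest ⊆ S := (Finset.erase_subset _ _).trans (Finset.erase_subset _ _)
          have hrow_rest : ∀ p ∈ rest, p.1 ≠ r0.1 ∧ p.1 ≠ k ∧ p.2 ≠ r0.2 ∧ p.2 ≠ q.2 := by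
            intro p hp
            have hpS := restS hp
            have hpner0 : p ≠ r0 := by rintro rfl; exact hr0rest hp
            have hpneq : p ≠ q := by rintro rfl; exact hqrest hp
            have h1 := hatt p hpS r0 hr0S hpner0
            have h2 := hatt p hpS q hqS hpneq
            exact ⟨h1.1, hqk ▸ h2.1, h1.2, h2.2⟩
          have hnew2 : (r0.1, q.2) ∉ rest := fun h => (hrow_rest _ h).1 rfl
          have hnew1 : (k, r0.2) ∉ insert (r0.1, q.2) rest := by
            intro h
            rcases Finset.mem_insert.mp h with h | h
            · exact hkne (congrArg Prod.fst h)
            · exact (hrow_rest _ h).2.1 rfl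
          set S' := insert (k, r0.2) (insert (r0.1, q.2) rest) with hS'
          have hq' : q ∈ S.erase r0 := Finset.mem_erase.mpr ⟨hqne, hqS⟩
          have hc1 : 0 < S.card := Finset.card_pos.mpr ⟨r0, hr0S⟩
          have hc2 : 0 < (S.erase r0).card := Finset.card_pos.mpr ⟨q, hq'⟩
          have hcr0 : (S.erase r0).card = S.card - 1 := Finset.card_erase_of_mem hr0S
          have hcq : rest.card = (S.erase r0).card - 1 := Finset.card_erase_of_mem hq'
          have hcardS' : S'.card = S.card := by
            rw [hS', Finset.card_insert_of_notMem hnew1, Finset.card_insert_of_notMem hnew2]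
            omega
          -- non-dot counts
          have hndr0 : w r0.1 ≠ r0.2 := fun h => hni (le_of_eq h)
          have hndq : w q.1 ≠ q.2 := by
            rw [hqk, hwk]; exact Ne.symm hyb
          have hnd_new2 : w r0.1 ≠ q.2 := fun h => hA (h ▸ (hb q hqS).2)
          have hfilterS' : (S'.filter fun p => w p.1 ≠ p.2).card
              = (rest.filter fun p => w p.1 ≠ p.2).card + 1 := by
            rw [hS', Finset.filter_insert, if_neg (by simpa using hwk),
              Finset.filter_insert, if_pos hnd_new2]
            exact Finset.card_insert_of_notMem
              (fun h => hnew2 (Finset.mem_of_mem_filter _ h))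
          have hfilterS : (rest.filter fun p => w p.1 ≠ p.2).card + 2
              ≤ (S.filter fun p => w p.1 ≠ p.2).card := by
            have hsub : insert r0 (insert q (rest.filter fun p => w p.1 ≠ p.2)) ⊆
                S.filter fun p => w p.1 ≠ p.2 := by
              intro x hx
              rcases Finset.mem_insert.mp hx with rfl | hx
              · exact Finset.mem_filter.mpr ⟨hr0S, hndr0⟩
              rcases Finset.mem_insert.mp hx with rfl | hx
              · exact Finset.mem_filter.mpr ⟨hqS, hndq⟩
              · exact Finset.mem_filter.mpr ⟨restS (Finset.mem_of_mem_filter _ hx),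
                  (Finset.mem_filter.mp hx).2⟩
            have hr0i : r0 ∉ insert q (rest.filter fun p => w p.1 ≠ p.2) := by
              intro h
              rcases Finset.mem_insert.mp h with h | h
              · exact hqne h.symm
              · exact hr0rest (Finset.mem_of_mem_filter _ h)
            have hqi : q ∉ rest.filter fun p => w p.1 ≠ p.2 :=
              fun h => hqrest (Finset.mem_of_mem_filter _ h)
            calc (rest.filter fun p => w p.1 ≠ p.2).card + 2
                = (insert r0 (insert q (rest.filter fun p => w p.1 ≠ p.2))).card := by
                  rw [Finset.card_insert_of_notMem hr0i, Finset.card_insert_of_notMem hqi]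
              _ ≤ _ := Finset.card_le_card hsub
          have hm2 : 2 ≤ m := le_trans (by omega) hm
          -- conditions for the swapped rook set
          have hD' : ∀ p ∈ S', p ∉ rotheDiagram w := by
            intro p hp
            rcases Finset.mem_insert.mp hp with rfl | hp
            · exact hkbD
            rcases Finset.mem_insert.mp hp with rfl | hp
            · exact se_closed w hw (hD q hqS) (show q.1 ≤ r0.1 from hqk ▸ hk) le_rfl
            · exact hD p (restS hp)
          have hb' : ∀ p ∈ S', (p.1 : ℕ) < iv + 1 ∧ p.2 ≤ j := by
            intro p hp
            rcases Finset.mem_insert.mp hp with rfl | hp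
            · exact ⟨by show (k : ℕ) < iv + 1; omega, hb2⟩
            rcases Finset.mem_insert.mp hp with rfl | hp
            · exact ⟨by show (r0.1 : ℕ) < iv + 1; omega, (hb q hqS).2⟩
            · exact hb p (restS hp)
          have hatt' : ∀ p ∈ S', ∀ q' ∈ S', p ≠ q' → p.1 ≠ q'.1 ∧ p.2 ≠ q'.2 := by
            intro p hp q' hq' hne
            rcases Finset.mem_insert.mp hp with rfl | hp
            · rcases Finset.mem_insert.mp hq' with rfl | hq'
              · exact absurd rfl hne
              rcases Finset.mem_insert.mp hq' with rfl | hq'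
              · exact ⟨hkne, Ne.symm hyb⟩
              · have := hrow_rest _ hq'
                exact ⟨Ne.symm this.2.1, Ne.symm this.2.2.1⟩
            rcases Finset.mem_insert.mp hp with rfl | hp
            · rcases Finset.mem_insert.mp hq' with rfl | hq'
              · exact ⟨Ne.symm hkne, hyb⟩
              rcases Finset.mem_insert.mp hq' with rfl | hq'
              · exact absurd rfl hne
              · have := hrow_rest _ hq'
                exact ⟨Ne.symm this.1, Ne.symm this.2.2.2⟩
            · rcases Finset.mem_insert.mp hq' with rfl | hq'
              · have := hrow_rest _ hp
                exact ⟨this.2.1, this.2.2.1⟩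
              rcases Finset.mem_insert.mp hq' with rfl | hq'
              · have := hrow_rest _ hp
                exact ⟨this.1, this.2.2.2⟩
              · exact hatt p (restS hp) q' (restS hq') hne
          have hrec : S'.card ≤ rkn w (iv + 1) j := by
            refine ih (iv + 1 + (m - 1)) (by omega) (iv + 1) (m - 1) le_rfl S' ?_ hD' hb' hatt'
            omega
          omega
        · -- the dot's row is free: move the rook onto the dot
          push_neg at hocc
          set S' := insert (k, r0.2) (S.erase r0) with hS'
          have hnew : (k, r0.2) ∉ S.erase r0 :=
            fun h => hocc _ (Finset.mem_of_mem_erase h) rfl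
          have hcardS' : S'.card = S.card := by
            rw [hS', Finset.card_insert_of_notMem hnew, Finset.card_erase_of_mem hr0S]
            have : 0 < S.card := Finset.card_pos.mpr ⟨r0, hr0S⟩
            omega
          have hmv : (S'.filter fun p => w p.1 ≠ p.2).card ≤ m := by
            rw [hS', Finset.filter_insert, if_neg (by simpa using hwk)]
            exact le_trans (Finset.card_le_card
              (Finset.filter_subset_filter _ (Finset.erase_subset _ _))) hm
          have hrec : S'.card ≤ rkn w iv j := by
            refine ih (iv + m) (by omega) iv m le_rfl S' hmv ?_ ?_ ?_
            · intro p hp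
              rcases Finset.mem_insert.mp hp with rfl | hp
              · exact hkbD
              · exact hD p (Finset.mem_of_mem_erase hp)
            · intro p hp
              rcases Finset.mem_insert.mp hp with rfl | hp
              · exact ⟨hklt, hb2⟩
              · exact ⟨hrows p (Finset.mem_of_mem_erase hp) (Finset.ne_of_mem_erase hp),
                  (hb p (Finset.mem_of_mem_erase hp)).2⟩
            · intro p hp q hq hne
              rcases Finset.mem_insert.mp hp with rfl | hp
              · rcases Finset.mem_insert.mp hq with rfl | hq
                · exact absurd rfl hne
                · refine ⟨fun h => hocc q (Finset.mem_of_mem_erase hq) h.symm, ?_⟩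
                  exact fun h => (hatt q (Finset.mem_of_mem_erase hq) r0 hr0S
                    (Finset.ne_of_mem_erase hq)).2 h.symm
              · rcases Finset.mem_insert.mp hq with rfl | hq
                · refine ⟨fun h => hocc p (Finset.mem_of_mem_erase hp) h, ?_⟩
                  exact (hatt p (Finset.mem_of_mem_erase hp) r0 hr0S
                    (Finset.ne_of_mem_erase hp)).2
                · exact hatt p (Finset.mem_of_mem_erase hp) q
                    (Finset.mem_of_mem_erase hq) hne
          calc S.card = S'.card := hcardS'.symm
            _ ≤ rkn w iv j := hrec
            _ ≤ rkn w (iv + 1) j := rkn_mono w (by omega) j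
    · -- no rook in the top row
      push_neg at hrow
      have h1 : S.card ≤ rkn w iv j := by
        refine ih (iv + m) (by omega) iv m le_rfl S hm hD ?_ hatt
        intro p hp
        have := (hb p hp).1
        have := hrow p hp
        exact ⟨by omega, (hb p hp).2⟩
      exact le_trans h1 (rkn_mono w (by omega) j)

/-- In any `(r_{ij}+1) × (r_{ij}+1)` pattern of non-attacking rooks inside the northwest
`i × j` rectangle, some rook lies in the Rothe diagram (for dominant `w`). -/
lemma exists_mem_rothe (hw : IsDominant w) (i j : Fin n)
    (rows cols : Fin (rankNW w i j + 1) → Fin n)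
    (hr : StrictMono rows) (hc : StrictMono cols)
    (hri : ∀ a, rows a ≤ i) (hcj : ∀ a, cols a ≤ j)
    (σ : Equiv.Perm (Fin (rankNW w i j + 1))) :
    ∃ a, (rows a, cols (σ a)) ∈ rotheDiagram w := by
  by_contra hcon
  push_neg at hcon
  have hinj : Function.Injective (fun a => (rows a, cols (σ a))) := by
    intro a b h
    exact hr.injective (congrArg Prod.fst h)
  set S : Finset (Fin n × Fin n) :=
    Finset.image (fun a => (rows a, cols (σ a))) Finset.univ with hSdef
  have hcard : S.card = rankNW w i j + 1 := by
    rw [hSdef, Finset.card_image_of_injective _ hinj, Finset.card_univ, Fintype.card_fin]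
  have hmain : S.card ≤ rkn w ((i : ℕ) + 1) j := by
    refine rook_bound w hw j ((i : ℕ) + 1 + S.card) ((i : ℕ) + 1) S.card le_rfl S
      (Finset.card_filter_le _ _) ?_ ?_ ?_
    · intro p hp
      obtain ⟨a, -, rfl⟩ := Finset.mem_image.mp hp
      exact hcon a
    · intro p hp
      obtain ⟨a, -, rfl⟩ := Finset.mem_image.mp hp
      exact ⟨by show ((rows a : ℕ)) < (i : ℕ) + 1; have := Fin.le_def.mp (hri a); omega,
        hcj (σ a)⟩
    · intro p hp q hq hne
      obtain ⟨a, -, rfl⟩ := Finset.mem_image.mp hp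
      obtain ⟨b, -, rfl⟩ := Finset.mem_image.mp hq
      have hab : a ≠ b := fun h => hne (by rw [h])
      exact ⟨hr.injective.ne hab, hc.injective.ne (fun h => hab (σ.injective h))⟩
  rw [hcard, ← rankNW_eq_rkn] at hmain
  omega

end Aux

/-- If `w` is dominant, then the Schubert determinantal ideal is generated by the
variables indexed by the effective region: `I_w = ⟨z_{ij} : (i,j) ∈ λ(w)⟩`. -/
theorem schubertIdeal_of_dominant (n : ℕ) (w : Equiv.Perm (Fin n)) (hw : IsDominant w) :
    schubertIdeal w =
      Ideal.span (MvPolynomial.X '' {p : Fin n × Fin n | p ∈ effRegion w}) := by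
  refine le_antisymm ?_ ?_
  · rw [schubertIdeal]
    refine Ideal.span_le.mpr ?_
    rintro f ⟨i, j, rows, cols, hr, hc, hri, hcj, rfl⟩
    rw [SetLike.mem_coe, Matrix.det_apply]
    refine Ideal.sum_mem _ fun σ _ => ?_
    obtain ⟨a, ha⟩ := exists_mem_rothe w hw i j rows cols hr hc hri hcj σ⁻¹
    have hx0 : (rows (σ (σ⁻¹ a)), cols (σ⁻¹ a)) ∈ rotheDiagram w := by
      rw [show σ (σ⁻¹ a) = a from Equiv.apply_symm_apply σ a]; exact ha
    have heff : (rows (σ (σ⁻¹ a)), cols (σ⁻¹ a)) ∈ effRegion w := by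
      unfold IsDominant at hw
      rw [← hw]; exact hx0
    have hdvd : (X (rows (σ (σ⁻¹ a)), cols (σ⁻¹ a)) : MvPolynomial (Fin n × Fin n) ℂ) ∣
        ∏ x, (Matrix.of fun a b =>
          (X (rows a, cols b) : MvPolynomial (Fin n × Fin n) ℂ)) (σ x) x :=
      Finset.dvd_prod_of_mem _ (Finset.mem_univ (σ⁻¹ a))
    obtain ⟨c, hc'⟩ := hdvd
    have hmem : (∏ x, (Matrix.of fun a b =>
        (X (rows a, cols b) : MvPolynomial (Fin n × Fin n) ℂ)) (σ x) x) ∈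
        Ideal.span (MvPolynomial.X '' {p : Fin n × Fin n | p ∈ effRegion w}) := by
      rw [hc']
      exact Ideal.mul_mem_right _ _ (Ideal.subset_span ⟨_, heff, rfl⟩)
    rw [Units.smul_def, zsmul_eq_mul]
    exact Ideal.mul_mem_left _ _ hmem
  · refine Ideal.span_le.mpr ?_
    rintro f ⟨p, hp, rfl⟩
    have hpD : p ∈ rotheDiagram w := by
      unfold IsDominant at hw
      rw [hw]; exact hp
    have h0 : rankNW w p.1 p.2 = 0 := rankNW_eq_zero w hw hpD
    rw [SetLike.mem_coe, schubertIdeal]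
    refine Ideal.subset_span ?_
    refine ⟨p.1, p.2, ?_⟩
    haveI : Unique (Fin (rankNW w p.1 p.2 + 1)) :=
      ⟨⟨⟨0, by omega⟩⟩, fun a => Fin.ext (by have := a.isLt; omega)⟩
    refine ⟨fun _ => p.1, fun _ => p.2, ?_, ?_, fun _ => le_rfl, fun _ => le_rfl, ?_⟩
    · intro a b hab; exact absurd (Subsingleton.elim a b) hab.ne
    · intro a b hab; exact absurd (Subsingleton.elim a b) hab.ne
    · rw [Matrix.det_unique]
      rfl
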